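/- Let G be a finite group with Sylow p-subgroup S and let P ≤ S be such that N_S(P) is a Sylow p-subgroup of N_G(P). Then C_S(P) is a Sylow p-subgroup of C_G(P), and N_S(P)/C_S(P) is a Sylow p-subgroup of N_G(P)/C_G(P). -/

import Mathlib

/-- In a finite group, if `B` is normal then the relative index of any `A` in `B`
divides the index of `A`. -/
lemma aux_relIndex_dvd_index {G : Type*} [Group G] [Finite G] (A B : Subgroup G)
    [B.Normal] : A.relIndex B ∣ A.index := by
  have h0 : (A ⊓ B).relIndex A ≠ 0 := Subgroup.index_ne_zero_of_finite
  have e1 := Subgroup.relIndex_mul_relIndex (A ⊓ B) A (A ⊔ B) inf_le_left le_sup_left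
  have e2 := Subgroup.relIndex_mul_relIndex (A ⊓ B) B (A ⊔ B) inf_le_right le_sup_right
  have e3 : B.relIndex (A ⊔ B) = (A ⊓ B).relIndex A := by
    rw [Subgroup.relIndex_sup_right, ← Subgroup.inf_relIndex_right B A, inf_comm]
  have e4 : A.relIndex B = A.relIndex (A ⊔ B) := by
    have h5 : (A ⊓ B).relIndex A * A.relIndex (A ⊔ B)
        = (A ⊓ B).relIndex A * (A ⊓ B).relIndex B := by
      rw [e1, ← e2, e3, mul_comm]
    have h6 := (Nat.eq_of_mul_eq_mul_left (Nat.pos_of_ne_zero h0) h5).symm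
    rw [← h6, Subgroup.inf_relIndex_right]
  rw [e4]
  have h7 := Subgroup.relIndex_mul_relIndex A (A ⊔ B) ⊤ le_sup_left le_top
  rw [Subgroup.relIndex_top_right, Subgroup.relIndex_top_right] at h7
  exact ⟨_, h7.symm⟩

lemma aux_centralizer_le_normalizer {G : Type*} [Group G] (P : Subgroup G) :
    Subgroup.centralizer (P : Set G) ≤ (Subgroup.normalizer (P : Set G)) := by
  intro x hx
  rw [Subgroup.mem_centralizer_iff] at hx
  rw [Subgroup.mem_normalizer_iff]
  intro h
  constructor
  · intro hh
    have h1 := hx h hh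
    rw [← h1, mul_inv_cancel_right]
    exact hh
  · intro hh
    have h1 := hx _ hh
    rw [inv_mul_cancel_right] at h1
    have h2 : h = x * h * x⁻¹ := mul_left_cancel h1
    rw [h2]
    exact hh

/-- Let `G` be a finite group with Sylow `p`-subgroup `S`, and
`P ≤ S` a subgroup such that `N_S(P)` is a Sylow `p`-subgroup of `N_G(P)`.
Then `C_S(P)` is a Sylow `p`-subgroup of `C_G(P)`, and
`Aut_S(P) = N_S(P)/C_S(P)` is a Sylow `p`-subgroup of
`Aut_G(P) = N_G(P)/C_G(P)` (realised as groups of automorphisms of `P`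
induced by conjugation). -/
theorem stmt13 (p : ℕ) [Fact p.Prime] (G : Type*) [Group G] [Fintype G]
    (S : Sylow p G) (P : Subgroup G) (hP : P ≤ S)
    (hNS : ∃ T : Sylow p ↥(Subgroup.normalizer (P : Set G)),
      (T : Subgroup ↥(Subgroup.normalizer (P : Set G))) =
        ((S : Subgroup G) ⊓ (Subgroup.normalizer (P : Set G))).subgroupOf (Subgroup.normalizer (P : Set G))) :
    (∃ T : Sylow p ↥(Subgroup.centralizer (P : Set G)),
      (T : Subgroup ↥(Subgroup.centralizer (P : Set G))) =
        ((S : Subgroup G) ⊓ Subgroup.centralizer (P : Set G)).subgroupOf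
          (Subgroup.centralizer (P : Set G))) ∧
    (∃ T : Sylow p ↥(P.normalizerMonoidHom.range),
      (T : Subgroup ↥(P.normalizerMonoidHom.range)) =
        (Subgroup.map P.normalizerMonoidHom
          (((S : Subgroup G) ⊓ (Subgroup.normalizer (P : Set G))).subgroupOf (Subgroup.normalizer (P : Set G)))).subgroupOf
            P.normalizerMonoidHom.range) := by
  obtain ⟨T, hT⟩ := hNS
  have hCN : Subgroup.centralizer (P : Set G) ≤ (Subgroup.normalizer (P : Set G)) :=
    aux_centralizer_le_normalizer P
  have hTidx : ¬ p ∣ (((S : Subgroup G) ⊓ (Subgroup.normalizer (P : Set G))).subgroupOf (Subgroup.normalizer (P : Set G))).index := by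
    rw [← hT]; exact T.not_dvd_index
  constructor
  · -- centralizer part
    have hpg : IsPGroup p
        (((S : Subgroup G) ⊓ Subgroup.centralizer (P : Set G)).subgroupOf
          (Subgroup.centralizer (P : Set G))) :=
      (S.isPGroup'.to_inf_left).of_equiv
        (Subgroup.subgroupOfEquivOfLe inf_le_right).symm
    have hBnormal : ((Subgroup.centralizer (P : Set G)).subgroupOf (Subgroup.normalizer (P : Set G))).Normal := by
      rw [← P.normalizerMonoidHom_ker]; infer_instance
    have hidx : ¬ p ∣
        (((S : Subgroup G) ⊓ Subgroup.centralizer (P : Set G)).subgroupOf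
          (Subgroup.centralizer (P : Set G))).index := by
      have h1 : (((S : Subgroup G) ⊓ Subgroup.centralizer (P : Set G)).subgroupOf
            (Subgroup.centralizer (P : Set G))).index
          = ((S : Subgroup G) ⊓ Subgroup.centralizer (P : Set G)).relIndex
            (Subgroup.centralizer (P : Set G)) := rfl
      have h2 : (S : Subgroup G) ⊓ Subgroup.centralizer (P : Set G)
          = ((S : Subgroup G) ⊓ (Subgroup.normalizer (P : Set G))) ⊓ Subgroup.centralizer (P : Set G) := by
        rw [inf_assoc, inf_eq_right.mpr hCN]
      have h3 : ((S : Subgroup G) ⊓ Subgroup.centralizer (P : Set G)).relIndex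
            (Subgroup.centralizer (P : Set G))
          = ((S : Subgroup G) ⊓ (Subgroup.normalizer (P : Set G))).relIndex
            (Subgroup.centralizer (P : Set G)) := by
        rw [h2, Subgroup.inf_relIndex_right]
      have h4 : ((S : Subgroup G) ⊓ (Subgroup.normalizer (P : Set G))).relIndex
            (Subgroup.centralizer (P : Set G))
          = ((((S : Subgroup G) ⊓ (Subgroup.normalizer (P : Set G))).subgroupOf (Subgroup.normalizer (P : Set G)))).relIndex
            ((Subgroup.centralizer (P : Set G)).subgroupOf (Subgroup.normalizer (P : Set G))) :=
        (Subgroup.relIndex_subgroupOf hCN).symm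
      have h5 := aux_relIndex_dvd_index
        (((S : Subgroup G) ⊓ (Subgroup.normalizer (P : Set G))).subgroupOf (Subgroup.normalizer (P : Set G)))
        ((Subgroup.centralizer (P : Set G)).subgroupOf (Subgroup.normalizer (P : Set G)))
      rw [h1, h3, h4]
      intro hdvd
      exact hTidx (hdvd.trans h5)
    exact ⟨hpg.toSylow hidx, IsPGroup.toSylow_coe hpg hidx⟩
  · -- automorphism part
    have hsurj : Function.Surjective P.normalizerMonoidHom.rangeRestrict :=
      P.normalizerMonoidHom.rangeRestrict_surjective
    refine ⟨T.mapSurjective hsurj, ?_⟩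
    rw [Sylow.coe_mapSurjective, hT]
    ext y
    simp only [Subgroup.mem_map, Subgroup.mem_subgroupOf, Subtype.ext_iff,
      MonoidHom.coe_rangeRestrict]
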